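/- Fano's inequality for finitely many pairs of distributions and arbitrary events: let N ≥ 1, let P₁,…,P_N and Q₁,…,Q_N be probability measures on a common measurable space (Ω, F), and let A₁,…,A_N be events (not necessarily disjoint). Assume 0 < (1/N)·Σᵢ Qᵢ(Aᵢ) < 1 and that each KL(Pᵢ, Qᵢ) is finite. Then (1/N)·Σᵢ Pᵢ(Aᵢ) ≤ ((1/N)·Σᵢ KL(Pᵢ, Qᵢ) + log 2) / ( − log((1/N)·Σᵢ Qᵢ(Aᵢ)) ). -/

import Mathlib

open MeasureTheory
open scoped ENNReal Classical

/-- The Kullback-Leibler divergence between two measures, with value `+∞`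
when `P` is not absolutely continuous w.r.t. `Q` or when the log-likelihood
ratio is not integrable. -/
noncomputable def KLdiv {Ω : Type*} [MeasurableSpace Ω] (P Q : Measure Ω) : ℝ≥0∞ :=
  if P ≪ Q ∧ Integrable (fun ω => Real.log (P.rnDeriv Q ω).toReal) P
  then ENNReal.ofReal (∫ ω, Real.log (P.rnDeriv Q ω).toReal ∂P)
  else ⊤

/-- A Donsker–Varadhan type bound for the exponential tilt of an indicator. -/
lemma dv_bound {Ω : Type*} [MeasurableSpace Ω] (P Q : Measure Ω)
    [IsProbabilityMeasure P] [IsProbabilityMeasure Q]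
    {A : Set Ω} (hA : MeasurableSet A) (hKL : KLdiv P Q ≠ ⊤) {l : ℝ} (hl : 0 ≤ l) :
    l * (P A).toReal ≤ (KLdiv P Q).toReal
      + Real.log ((Q A).toReal * (Real.exp l - 1) + 1) := by
  by_cases hcond : P ≪ Q ∧ Integrable (fun ω => Real.log (P.rnDeriv Q ω).toReal) P
  swap
  · exact absurd (by rw [KLdiv, if_neg hcond]) hKL
  obtain ⟨hac, hint⟩ := hcond
  set g : Ω → ℝ := fun ω => (P.rnDeriv Q ω).toReal with hg
  set q : ℝ := (Q A).toReal with hqdef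
  have hq0 : 0 ≤ q := ENNReal.toReal_nonneg
  have hel : (1 : ℝ) ≤ Real.exp l := by
    calc (1:ℝ) = Real.exp 0 := Real.exp_zero.symm
    _ ≤ Real.exp l := Real.exp_le_exp.2 hl
  have hE : (0:ℝ) ≤ Real.exp l - 1 := by linarith
  set Z : ℝ := q * (Real.exp l - 1) + 1 with hZdef
  have hZ1 : (1 : ℝ) ≤ Z := by nlinarith
  have hZ0 : (0 : ℝ) < Z := lt_of_lt_of_le one_pos hZ1
  set h : Ω → ℝ := fun ω => Real.exp (A.indicator (fun _ => l) ω) / Z with hhdef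
  have hhpos : ∀ ω, 0 < h ω := fun ω => div_pos (Real.exp_pos _) hZ0
  have hlogh : ∀ ω, Real.log (h ω) = A.indicator (fun _ => l) ω - Real.log Z := by
    intro ω
    rw [hhdef]
    rw [Real.log_div (Real.exp_ne_zero _) hZ0.ne', Real.log_exp]
  have hhmeas : Measurable h :=
    ((measurable_const.indicator hA).exp).div measurable_const
  have hgmeas : Measurable g := (Measure.measurable_rnDeriv P Q).ennreal_toReal
  -- pointwise bound
  have hae : ∀ᵐ ω ∂P, Real.log (h ω) + (1 - h ω / g ω) ≤ Real.log (g ω) := by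
    filter_upwards [Measure.rnDeriv_pos hac, hac.ae_le (Measure.rnDeriv_lt_top P Q)]
      with ω h1 h2
    have hgpos : 0 < g ω := ENNReal.toReal_pos h1.ne' h2.ne
    have hdiv : 0 < g ω / h ω := div_pos hgpos (hhpos ω)
    have key := Real.one_sub_inv_le_log_of_pos hdiv
    rw [Real.log_div hgpos.ne' (hhpos ω).ne'] at key
    have hinv : (g ω / h ω)⁻¹ = h ω / g ω := by rw [inv_div]
    rw [hinv] at key
    linarith
  -- the quotient h/g has (lower) integral at most 1
  have hLle : ∫⁻ ω, ENNReal.ofReal (h ω / g ω) ∂P ≤ 1 := by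
    have hmeas2 : AEMeasurable (fun ω => ENNReal.ofReal (h ω / g ω)) Q :=
      ((hhmeas.div hgmeas).ennreal_ofReal).aemeasurable
    rw [← lintegral_rnDeriv_mul hac hmeas2]
    have hptw : ∀ ω, P.rnDeriv Q ω * ENNReal.ofReal (h ω / g ω)
        ≤ ENNReal.ofReal (h ω) := by
      intro ω
      rcases eq_or_ne (P.rnDeriv Q ω) 0 with h0 | h0
      · simp [h0]
      rcases eq_or_ne (P.rnDeriv Q ω) ⊤ with htop | htop
      · have hgz : g ω = 0 := by simp [hg, htop]
        simp [hgz, htop]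
      · have hgpos : 0 < g ω := ENNReal.toReal_pos h0 htop
        have hD : P.rnDeriv Q ω = ENNReal.ofReal (g ω) := by
          rw [hg]; exact (ENNReal.ofReal_toReal htop).symm
        rw [ENNReal.ofReal_div_of_pos hgpos, ← hD,
          ENNReal.mul_div_cancel h0 htop]
    calc ∫⁻ ω, P.rnDeriv Q ω * ENNReal.ofReal (h ω / g ω) ∂Q
        ≤ ∫⁻ ω, ENNReal.ofReal (h ω) ∂Q := lintegral_mono hptw
      _ ≤ 1 := by
        have hh2 : ∀ ω, ENNReal.ofReal (h ω)
            = A.indicator (fun _ => ENNReal.ofReal ((Real.exp l - 1) / Z)) ω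
              + ENNReal.ofReal (1 / Z) := by
          intro ω
          by_cases hw : ω ∈ A
          · rw [Set.indicator_of_mem hw, hhdef]
            simp only [Set.indicator_of_mem hw]
            rw [← ENNReal.ofReal_add (div_nonneg hE hZ0.le) (by positivity)]
            congr 1
            rw [← add_div]
            norm_num
          · rw [Set.indicator_of_notMem hw, hhdef]
            simp only [Set.indicator_of_notMem hw, Real.exp_zero, zero_add]
        simp_rw [hh2]
        rw [lintegral_add_right _ measurable_const, lintegral_indicator_const hA,
          lintegral_const, measure_univ, mul_one]
        have hQA : Q A = ENNReal.ofReal q := by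
          rw [hqdef, ENNReal.ofReal_toReal (measure_ne_top Q A)]
        rw [hQA, ← ENNReal.ofReal_mul (div_nonneg hE hZ0.le), ← ENNReal.ofReal_add
          (mul_nonneg (div_nonneg hE hZ0.le) hq0) (by positivity)]
        have hval : (Real.exp l - 1) / Z * q + 1 / Z = 1 := by
          field_simp
          ring
        rw [hval, ENNReal.ofReal_one]
  -- integrability of h/g
  have hfg_nonneg : ∀ ω, 0 ≤ h ω / g ω := fun ω =>
    div_nonneg (hhpos ω).le ENNReal.toReal_nonneg
  have hfg_int : Integrable (fun ω => h ω / g ω) P := by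
    refine ⟨(hhmeas.div hgmeas).aestronglyMeasurable, ?_⟩
    rw [hasFiniteIntegral_iff_ofReal (Filter.Eventually.of_forall hfg_nonneg)]
    exact lt_of_le_of_lt hLle ENNReal.one_lt_top
  have hfg_le : ∫ ω, h ω / g ω ∂P ≤ 1 := by
    rw [integral_eq_lintegral_of_nonneg_ae (Filter.Eventually.of_forall hfg_nonneg)
      (hhmeas.div hgmeas).aestronglyMeasurable]
    calc (∫⁻ ω, ENNReal.ofReal (h ω / g ω) ∂P).toReal ≤ (1 : ℝ≥0∞).toReal :=
        ENNReal.toReal_mono (by simp) hLle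
      _ = 1 := by simp
  -- integrability of log h
  have hlogh_eq : (fun ω => Real.log (h ω))
      = fun ω => A.indicator (fun _ => l) ω - Real.log Z := funext hlogh
  have hlogh_int : Integrable (fun ω => Real.log (h ω)) P := by
    rw [hlogh_eq]
    exact ((integrable_const l).indicator hA).sub (integrable_const _)
  -- integrate the pointwise bound
  have h2 : Integrable (fun ω => 1 - h ω / g ω) P := (integrable_const 1).sub hfg_int
  have hmain : ∫ ω, (Real.log (h ω) + (1 - h ω / g ω)) ∂P
      ≤ ∫ ω, Real.log (g ω) ∂P :=
    integral_mono_ae (hlogh_int.add h2) hint hae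
  have hsplit : ∫ ω, (Real.log (h ω) + (1 - h ω / g ω)) ∂P
      = (∫ ω, Real.log (h ω) ∂P) + (1 - ∫ ω, h ω / g ω ∂P) := by
    rw [integral_add hlogh_int h2, integral_sub (integrable_const 1) hfg_int,
      integral_const, probReal_univ]
    norm_num
  rw [hsplit] at hmain
  have hlogh_integral : ∫ ω, Real.log (h ω) ∂P = l * (P A).toReal - Real.log Z := by
    rw [hlogh_eq, integral_sub ((integrable_const l).indicator hA) (integrable_const _),
      integral_indicator_const _ hA, integral_const, probReal_univ]
    simp [mul_comm, Measure.real]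
  rw [hlogh_integral] at hmain
  have hKLval : ∫ ω, Real.log (g ω) ∂P ≤ (KLdiv P Q).toReal := by
    rw [KLdiv, if_pos ⟨hac, hint⟩]
    rcases le_or_gt 0 (∫ ω, Real.log (g ω) ∂P) with hI | hI
    · rw [hg] at hI ⊢
      rw [ENNReal.toReal_ofReal hI]
    · have h0 : ENNReal.ofReal (∫ ω, Real.log (g ω) ∂P) = 0 :=
        ENNReal.ofReal_of_nonpos hI.le
      rw [hg] at h0 hI ⊢
      rw [h0]
      simpa using hI.le
  linarith

/-- Fano's inequality for finitely many pairs of distributions and arbitrary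
(not necessarily disjoint) events. -/
theorem fano_finite_events {Ω : Type*} [MeasurableSpace Ω] (N : ℕ) (hN : 1 ≤ N)
    (P Q : Fin N → Measure Ω)
    [∀ i, IsProbabilityMeasure (P i)] [∀ i, IsProbabilityMeasure (Q i)]
    (A : Fin N → Set Ω) (hA : ∀ i, MeasurableSet (A i))
    (hKL : ∀ i, KLdiv (P i) (Q i) ≠ ⊤)
    (hq0 : 0 < (1 / N : ℝ) * ∑ i, (Q i (A i)).toReal)
    (hq1 : (1 / N : ℝ) * ∑ i, (Q i (A i)).toReal < 1) :
    (1 / N : ℝ) * ∑ i, (P i (A i)).toReal ≤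
      ((1 / N : ℝ) * ∑ i, (KLdiv (P i) (Q i)).toReal + Real.log 2) /
        (- Real.log ((1 / N : ℝ) * ∑ i, (Q i (A i)).toReal)) := by
  have hNpos : (0 : ℝ) < N := by exact_mod_cast hN
  set qb : ℝ := (1 / N : ℝ) * ∑ i, (Q i (A i)).toReal with hqb
  have hlogneg : Real.log qb < 0 := Real.log_neg hq0 hq1
  set l : ℝ := - Real.log qb with hl
  have hlpos : 0 < l := by simpa [hl] using hlogneg
  have hexp : Real.exp l = qb⁻¹ := by
    rw [hl, Real.exp_neg, Real.exp_log hq0]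
  -- per-index bound
  have hper : ∀ i, l * (P i (A i)).toReal ≤ (KLdiv (P i) (Q i)).toReal
      + Real.log ((Q i (A i)).toReal * (Real.exp l - 1) + 1) :=
    fun i => dv_bound (P i) (Q i) (hA i) (hKL i) hlpos.le
  -- abbreviations
  set Zi : Fin N → ℝ := fun i => (Q i (A i)).toReal * (Real.exp l - 1) + 1 with hZi
  have hqi0 : ∀ i, (0:ℝ) ≤ (Q i (A i)).toReal := fun i => ENNReal.toReal_nonneg
  have hel : (1 : ℝ) ≤ Real.exp l := by
    calc (1:ℝ) = Real.exp 0 := Real.exp_zero.symm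
    _ ≤ Real.exp l := Real.exp_le_exp.2 hlpos.le
  have hZipos : ∀ i, (0:ℝ) < Zi i := by
    intro i
    have h1 := hqi0 i
    have h2 : Zi i = (Q i (A i)).toReal * (Real.exp l - 1) + 1 := rfl
    rw [h2]
    nlinarith
  -- Jensen for log
  have hw1 : ∑ _i : Fin N, (1 / N : ℝ) = 1 := by
    rw [Finset.sum_const, Finset.card_univ, Fintype.card_fin, nsmul_eq_mul]
    field_simp
  have hjensen : ∑ i, (1 / N : ℝ) • Real.log (Zi i)
      ≤ Real.log (∑ i, (1 / N : ℝ) • Zi i) := by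
    refine (strictConcaveOn_log_Ioi.concaveOn).le_map_sum
      (fun i _ => by positivity) hw1 (fun i _ => hZipos i)
  -- average of Zi
  have hsumZ : ∑ i, Zi i = (∑ i, (Q i (A i)).toReal) * (qb⁻¹ - 1) + N := by
    have hzz : ∀ i, Zi i = (Q i (A i)).toReal * (qb⁻¹ - 1) + 1 := by
      intro i
      show (Q i (A i)).toReal * (Real.exp l - 1) + 1 = _
      rw [hexp]
    simp_rw [hzz]
    rw [Finset.sum_add_distrib, Finset.sum_const, Finset.card_univ, Fintype.card_fin,
      nsmul_eq_mul, mul_one, Finset.sum_mul]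
  have havg : ∑ i, (1 / N : ℝ) • Zi i = 2 - qb := by
    simp only [smul_eq_mul]
    rw [← Finset.mul_sum, hsumZ, mul_add]
    have h1 : (1 / N : ℝ) * ((∑ i, (Q i (A i)).toReal) * (qb⁻¹ - 1))
        = qb * (qb⁻¹ - 1) := by
      rw [← mul_assoc, show (1 / N : ℝ) * ∑ i, (Q i (A i)).toReal = qb from hqb.symm]
    have h2 : (1 / N : ℝ) * (N : ℝ) = 1 := by
      field_simp
    rw [h1, h2, mul_sub, mul_inv_cancel₀ hq0.ne']
    ring
  -- combine
  have hsum_bound : l * ((1 / N : ℝ) * ∑ i, (P i (A i)).toReal)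
      ≤ (1 / N : ℝ) * ∑ i, (KLdiv (P i) (Q i)).toReal + Real.log 2 := by
    have hs : ∑ i, l * (P i (A i)).toReal
        ≤ ∑ i, ((KLdiv (P i) (Q i)).toReal + Real.log (Zi i)) :=
      Finset.sum_le_sum fun i _ => hper i
    have hmul : (1 / N : ℝ) * ∑ i, l * (P i (A i)).toReal
        ≤ (1 / N : ℝ) * ∑ i, ((KLdiv (P i) (Q i)).toReal + Real.log (Zi i)) := by
      apply mul_le_mul_of_nonneg_left hs (by positivity)
    rw [← Finset.mul_sum, Finset.sum_add_distrib, mul_add] at hmul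
    have hlogbound : (1 / N : ℝ) * ∑ i, Real.log (Zi i) ≤ Real.log 2 := by
      have h1 : (1 / N : ℝ) * ∑ i, Real.log (Zi i)
          = ∑ i, (1 / N : ℝ) • Real.log (Zi i) := by
        rw [Finset.mul_sum]; simp [smul_eq_mul]
      rw [h1]
      refine hjensen.trans ?_
      rw [havg]
      have hle2 : 2 - qb ≤ 2 := by linarith
      exact Real.log_le_log (by linarith) hle2
    calc l * ((1 / N : ℝ) * ∑ i, (P i (A i)).toReal)
        = (1 / N : ℝ) * (l * ∑ i, (P i (A i)).toReal) := by ring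
      _ ≤ (1 / N : ℝ) * ∑ i, (KLdiv (P i) (Q i)).toReal
            + (1 / N : ℝ) * ∑ i, Real.log (Zi i) := hmul
      _ ≤ (1 / N : ℝ) * ∑ i, (KLdiv (P i) (Q i)).toReal + Real.log 2 := by
            linarith
  rw [le_div_iff₀ hlpos]
  calc (1 / N : ℝ) * (∑ i, (P i (A i)).toReal) * l
      = l * ((1 / N : ℝ) * ∑ i, (P i (A i)).toReal) := by ring
    _ ≤ (1 / N : ℝ) * ∑ i, (KLdiv (P i) (Q i)).toReal + Real.log 2 := hsum_bound
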